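/- (Chain rule.) Let 𝕋 be a time scale, α ∈ (0,1), and t ∈ 𝕋^κ. Assume g : ℝ → ℝ is continuous, the restriction of g to 𝕋 has a fractional derivative L_g of order α at t, and f : ℝ → ℝ is continuously differentiable. Then there exists c in the real interval [t, σ(t)] such that f′(g(c))·L_g is a fractional derivative of order α at t of the composition f ∘ g restricted to 𝕋. -/

import Mathlib

open Real Set Classical

/-- Forward jump operator of a time scale, with the convention `σ t = t`
when `{s ∈ T | t < s}` is empty. -/
noncomputable def tsSigma (T : Set ℝ) (t : ℝ) : ℝ :=
  if ({s | s ∈ T ∧ t < s}).Nonempty then sInf {s | s ∈ T ∧ t < s} else t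

/-- Graininess function `μ t = σ t - t`. -/
noncomputable def tsMu (T : Set ℝ) (t : ℝ) : ℝ :=
  tsSigma T t - t

/-- Backward jump operator, with the convention `ρ t = t`
when `{s ∈ T | s < t}` is empty. -/
noncomputable def tsRho (T : Set ℝ) (t : ℝ) : ℝ :=
  if ({s | s ∈ T ∧ s < t}).Nonempty then sSup {s | s ∈ T ∧ s < t} else t

/-- `T^κ`: `T` with its maximum removed if the maximum exists and is
left-scattered; `T` otherwise. -/
def tsKappa (T : Set ℝ) : Set ℝ :=
  {t | t ∈ T ∧ ¬ (IsGreatest T t ∧ tsRho T t < t)}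

/-- `t` is right-scattered when `σ t > t`. -/
def RightScattered (T : Set ℝ) (t : ℝ) : Prop :=
  t < tsSigma T t

/-- `t` is right-dense when `t < sup T` and `σ t = t`. -/
def RightDense (T : Set ℝ) (t : ℝ) : Prop :=
  (∃ s ∈ T, t < s) ∧ tsSigma T t = t

/-- Signed real power `x^α = sign(x) · |x|^α` (agrees with `rpow` for `x ≥ 0`). -/
noncomputable def fpow (α x : ℝ) : ℝ := Real.sign x * |x| ^ α

/-- `α = 1/q` for some odd natural number `q`. -/
def IsOddRecip (α : ℝ) : Prop := ∃ q : ℕ, Odd q ∧ α = 1 / (q : ℝ)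

/-- `L` is a fractional derivative of `f` of order `α` at `t` on the time scale `T`. -/
def FracDerivAt (T : Set ℝ) (f : ℝ → ℝ) (α t L : ℝ) : Prop :=
  (IsOddRecip α →
    ∀ ε > (0:ℝ), ∃ δ > (0:ℝ), ∀ s ∈ T, |t - s| < δ →
      |(f (tsSigma T t) - f s) - L * fpow α (tsSigma T t - s)|
        ≤ ε * |tsSigma T t - s| ^ α) ∧
  (¬ IsOddRecip α →
    ∀ ε > (0:ℝ), ∃ δ > (0:ℝ), ∀ s ∈ T, t - δ < s → s < t →
      |(f (tsSigma T t) - f s) - L * fpow α (tsSigma T t - s)|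
        ≤ ε * |tsSigma T t - s| ^ α)

/-- Continuity at `t` of `f` as a function on the time scale `T`. -/
def ContinuousAtTS (T : Set ℝ) (f : ℝ → ℝ) (t : ℝ) : Prop :=
  ∀ ε > (0:ℝ), ∃ δ > (0:ℝ), ∀ s ∈ T, |t - s| < δ → |f t - f s| ≤ ε

lemma fpow_of_pos {α x : ℝ} (hx : 0 < x) : fpow α x = x ^ α := by
  simp [fpow, Real.sign_of_pos hx, abs_of_pos hx]

lemma abs_fpow {α : ℝ} (hα : 0 < α) (x : ℝ) : |fpow α x| = |x| ^ α := by
  rcases lt_trichotomy x 0 with h | h | h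
  · simp [fpow, Real.sign_of_neg h, abs_of_pos (Real.rpow_pos_of_pos (abs_pos.2 h.ne) α)]
  · simp [fpow, h, Real.zero_rpow hα.ne']
  · simp [fpow, Real.sign_of_pos h, abs_of_pos (Real.rpow_pos_of_pos (abs_pos.2 h.ne') α)]

lemma mvt_uIcc (f : ℝ → ℝ) (hf : ContDiff ℝ 1 f) (x y : ℝ) :
    ∃ ξ ∈ Set.uIcc x y, f x - f y = deriv f ξ * (x - y) := by
  rcases eq_or_ne x y with h | h
  · exact ⟨x, Set.left_mem_uIcc, by simp [h]⟩
  rcases h.lt_or_gt with hlt | hlt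
  · obtain ⟨c, hc, hc2⟩ := exists_deriv_eq_slope f hlt hf.continuous.continuousOn
      ((hf.differentiable one_ne_zero).differentiableOn)
    refine ⟨c, Set.mem_uIcc.2 (Or.inl ⟨hc.1.le, hc.2.le⟩), ?_⟩
    rw [hc2, div_mul_eq_mul_div, eq_div_iff (sub_ne_zero.2 hlt.ne')]; ring
  · obtain ⟨c, hc, hc2⟩ := exists_deriv_eq_slope f hlt hf.continuous.continuousOn
      ((hf.differentiable one_ne_zero).differentiableOn)
    refine ⟨c, Set.mem_uIcc.2 (Or.inr ⟨hc.1.le, hc.2.le⟩), ?_⟩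
    rw [hc2, div_mul_eq_mul_div, eq_div_iff (sub_ne_zero.2 hlt.ne')]

lemma abs_sub_of_uIcc {ξ x y : ℝ} (h : ξ ∈ Set.uIcc x y) : |ξ - x| ≤ |x - y| := by
  rw [Set.mem_uIcc] at h
  have h1 := le_abs_self (x - y)
  have h2 := neg_abs_le (x - y)
  rw [abs_le]
  rcases h with ⟨ha, hb⟩ | ⟨ha, hb⟩ <;> constructor <;> linarith

lemma tsSigma_ge (T : Set ℝ) (t : ℝ) : t ≤ tsSigma T t := by
  unfold tsSigma
  split_ifs with h
  · exact le_csInf h fun b hb => hb.2.le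
  · exact le_rfl

lemma caseC_est (f g : ℝ → ℝ) (hf : ContDiff ℝ 1 f) (hgc : Continuous g)
    (α t Lg : ℝ) (hα : 0 < α) (ε : ℝ) (hε : 0 < ε) :
    ∃ ε₁ > (0:ℝ), ∃ δ > (0:ℝ), ∀ s : ℝ, |t - s| < δ →
      |(g t - g s) - Lg * fpow α (t - s)| ≤ ε₁ * |t - s| ^ α →
      |((f (g t)) - (f (g s))) - (deriv f (g t) * Lg) * fpow α (t - s)| ≤ ε * |t - s| ^ α := by
  set A := deriv f (g t) with hA
  set K := |A| + 1 with hK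
  have hK0 : (0:ℝ) < K := by positivity
  set ε₂ := min 1 (ε / (2 * (|Lg| + 1))) with hε₂def
  have hε₂ : 0 < ε₂ := lt_min one_pos (by positivity)
  refine ⟨ε / (2 * K), by positivity, ?_⟩
  have hdc : ContinuousAt (deriv f) (g t) := (hf.continuous_deriv le_rfl).continuousAt
  obtain ⟨η, hη, hη2⟩ := Metric.continuousAt_iff.1 hdc ε₂ hε₂
  obtain ⟨δ₂, hδ₂, hδ₂2⟩ := Metric.continuousAt_iff.1 hgc.continuousAt η hη
  refine ⟨δ₂, hδ₂, fun s hs hbound => ?_⟩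
  obtain ⟨ξ, hξ, hmvt⟩ := mvt_uIcc f hf (g t) (g s)
  have hgs : |g s - g t| < η := by
    have := hδ₂2 (x := s) (by rw [Real.dist_eq, abs_sub_comm]; exact hs)
    rwa [Real.dist_eq] at this
  have hξt : |ξ - g t| < η := lt_of_le_of_lt (abs_sub_of_uIcc hξ) (by rwa [abs_sub_comm])
  have hdξ : |deriv f ξ - A| < ε₂ := by
    have := hη2 (x := ξ) (by rwa [Real.dist_eq])
    rwa [Real.dist_eq] at this
  have hdξK : |deriv f ξ| ≤ K := by
    have h1 : ε₂ ≤ 1 := min_le_left _ _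
    calc |deriv f ξ| ≤ |deriv f ξ - A| + |A| := by
          have := abs_sub_abs_le_abs_sub (deriv f ξ) A; linarith [abs_sub_abs_le_abs_sub (deriv f ξ) A]
      _ ≤ K := by rw [hK]; linarith
  have hfp : |fpow α (t - s)| = |t - s| ^ α := abs_fpow hα _
  have key : (f (g t) - f (g s)) - A * Lg * fpow α (t - s)
      = deriv f ξ * ((g t - g s) - Lg * fpow α (t - s)) + (deriv f ξ - A) * (Lg * fpow α (t - s)) := by
    rw [hmvt]; ring
  rw [key]
  have hpow0 : (0:ℝ) ≤ |t - s| ^ α := Real.rpow_nonneg (abs_nonneg _) _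
  calc |deriv f ξ * ((g t - g s) - Lg * fpow α (t - s)) + (deriv f ξ - A) * (Lg * fpow α (t - s))|
      ≤ |deriv f ξ| * |(g t - g s) - Lg * fpow α (t - s)| + |deriv f ξ - A| * (|Lg| * |fpow α (t - s)|) := by
        refine le_trans (abs_add_le _ _) ?_
        rw [abs_mul, abs_mul, abs_mul]
    _ ≤ K * (ε / (2 * K) * |t - s| ^ α) + ε₂ * (|Lg| * |t - s| ^ α) := by
        refine add_le_add ?_ ?_
        · exact mul_le_mul hdξK hbound (abs_nonneg _) hK0.le
        · rw [hfp]; exact mul_le_mul hdξ.le le_rfl (by positivity) hε₂.le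
    _ ≤ ε / 2 * |t - s| ^ α + ε / 2 * |t - s| ^ α := by
        refine add_le_add ?_ ?_
        · rw [← mul_assoc]
          have : K * (ε / (2 * K)) = ε / 2 := by field_simp
          rw [this]
        · have h2 : ε₂ ≤ ε / (2 * (|Lg| + 1)) := min_le_right _ _
          have : ε₂ * |Lg| ≤ ε / 2 := by
            calc ε₂ * |Lg| ≤ ε / (2 * (|Lg| + 1)) * (|Lg| + 1) := by
                  refine mul_le_mul h2 (by linarith) (abs_nonneg _) (by positivity)
              _ = ε / 2 := by field_simp
          calc ε₂ * (|Lg| * |t - s| ^ α) = (ε₂ * |Lg|) * |t - s| ^ α := by ring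
            _ ≤ ε / 2 * |t - s| ^ α := mul_le_mul_of_nonneg_right this hpow0
    _ = ε * |t - s| ^ α := by ring

lemma caseA_strong (f g : ℝ → ℝ) (hf : ContDiff ℝ 1 f) (hgc : Continuous g)
    (α t Lg σ : ℝ) (hα : 0 < α) (hlt : t < σ)
    (hId : Lg * (σ - t) ^ α = g σ - g t) :
    ∃ c ∈ Set.Icc t σ, ∀ ε > (0:ℝ), ∃ δ > (0:ℝ), ∀ s : ℝ, |t - s| < δ →
      |(f (g σ) - f (g s)) - (deriv f (g c) * Lg) * fpow α (σ - s)| ≤ ε * |σ - s| ^ α := by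
  obtain ⟨ξ, hξ, hmvt⟩ := mvt_uIcc f hf (g σ) (g t)
  have hξ' : ξ ∈ Set.uIcc (g t) (g σ) := by rwa [Set.uIcc_comm]
  obtain ⟨c, hc, hgc'⟩ := intermediate_value_uIcc hgc.continuousOn hξ'
  rw [Set.uIcc_of_le hlt.le] at hc
  refine ⟨c, hc, ?_⟩
  set A := deriv f (g c) with hA
  have key : A * Lg * (σ - t) ^ α = f (g σ) - f (g t) := by
    rw [hA, hgc', mul_assoc, hId, ← hmvt]
  set φ : ℝ → ℝ := fun s => (f (g σ) - f (g s)) - A * Lg * (σ - s) ^ α with hφ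
  have hφt : φ t = 0 := by simp only [hφ]; rw [key]; ring
  have hrc : ContinuousAt (fun s : ℝ => (σ - s) ^ α) t := by
    have h1 : ContinuousAt (fun x : ℝ => x ^ α) (σ - t) :=
      Real.continuousAt_rpow_const _ _ (Or.inl (sub_ne_zero.2 hlt.ne'))
    exact h1.comp ((continuous_const.sub continuous_id).continuousAt)
  have hφc : ContinuousAt φ t :=
    (continuousAt_const.sub (hf.continuous.comp hgc).continuousAt).sub
      (continuousAt_const.mul hrc)
  intro ε hε
  have hd2 : (0:ℝ) < (σ - t) / 2 := by linarith
  have htar : (0:ℝ) < ε * ((σ - t) / 2) ^ α := by positivity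
  obtain ⟨δ', hδ', H⟩ := Metric.continuousAt_iff.1 hφc _ htar
  refine ⟨min δ' ((σ - t) / 2), lt_min hδ' hd2, fun s hs => ?_⟩
  have hs1 : |t - s| < δ' := lt_of_lt_of_le hs (min_le_left _ _)
  have hs2 : |t - s| < (σ - t) / 2 := lt_of_lt_of_le hs (min_le_right _ _)
  have hst := abs_lt.1 hs2
  have hσs : (σ - t) / 2 ≤ σ - s := by linarith
  have hσs0 : (0:ℝ) < σ - s := by linarith
  have hφs : |φ s| < ε * ((σ - t) / 2) ^ α := by
    have := H (x := s) (by rw [Real.dist_eq, abs_sub_comm]; exact hs1)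
    rwa [Real.dist_eq, hφt, sub_zero] at this
  have heq : (f (g σ) - f (g s)) - (A * Lg) * fpow α (σ - s) = φ s := by
    rw [hφ]; simp only [fpow_of_pos hσs0]
  rw [heq, abs_of_pos hσs0]
  calc |φ s| ≤ ε * ((σ - t) / 2) ^ α := hφs.le
    _ ≤ ε * (σ - s) ^ α :=
        mul_le_mul_of_nonneg_left (Real.rpow_le_rpow hd2.le hσs hα.le) hε.le

lemma strong_to_frac (T : Set ℝ) (F : ℝ → ℝ) (α t L : ℝ)
    (H : ∀ ε > (0:ℝ), ∃ δ > (0:ℝ), ∀ s : ℝ, |t - s| < δ →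
      |(F (tsSigma T t) - F s) - L * fpow α (tsSigma T t - s)| ≤ ε * |tsSigma T t - s| ^ α) :
    FracDerivAt T F α t L := by
  constructor
  · intro _ ε hε
    obtain ⟨δ, hδ, H'⟩ := H ε hε
    exact ⟨δ, hδ, fun s _ hs => H' s hs⟩
  · intro _ ε hε
    obtain ⟨δ, hδ, H'⟩ := H ε hε
    exact ⟨δ, hδ, fun s _ h1 h2 => H' s (by rw [abs_of_pos (by linarith)]; linarith)⟩

/-- Chain rule: if `g : ℝ → ℝ` is continuous, `g` (restricted to `T`) has fractional
derivative `L_g` of order `α ∈ (0,1)` at `t ∈ T^κ`, and `f : ℝ → ℝ` is continuously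
differentiable, then there is `c ∈ [t, σ t]` such that `f'(g c)·L_g` is a fractional
derivative of `f ∘ g` of order `α` at `t`. -/
theorem fracDeriv_chain
    (T : Set ℝ) (hT : T.Nonempty) (hTc : IsClosed T)
    (α : ℝ) (hα : α ∈ Set.Ioo (0:ℝ) 1)
    (t : ℝ) (ht : t ∈ tsKappa T)
    (g : ℝ → ℝ) (hgc : Continuous g) (Lg : ℝ)
    (hg : FracDerivAt T g α t Lg)
    (f : ℝ → ℝ) (hf : ContDiff ℝ 1 f) :
    ∃ c ∈ Set.Icc t (tsSigma T t),
      FracDerivAt T (f ∘ g) α t (deriv f (g c) * Lg) := by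
  obtain ⟨htT, -⟩ := ht
  obtain ⟨hα0, hα1⟩ := hα
  have hσge : t ≤ tsSigma T t := tsSigma_ge T t
  set σ := tsSigma T t with hσdef
  rcases eq_or_lt_of_le hσge with hσ | hσ
  · -- right-dense case: σ = t
    refine ⟨t, ⟨le_refl t, hσge⟩, ?_⟩
    constructor
    · intro hodd ε hε
      obtain ⟨ε₁, hε₁, δ₂, hδ₂, Hest⟩ := caseC_est f g hf hgc α t Lg hα0 ε hε
      obtain ⟨δ₁, hδ₁, H1⟩ := hg.1 hodd ε₁ hε₁
      refine ⟨min δ₁ δ₂, lt_min hδ₁ hδ₂, fun s hsT hslt => ?_⟩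
      have h1 := H1 s hsT (lt_of_lt_of_le hslt (min_le_left _ _))
      rw [← hσdef, ← hσ] at h1 ⊢
      simp only [Function.comp_apply]
      exact Hest s (lt_of_lt_of_le hslt (min_le_right _ _)) h1
    · intro hnodd ε hε
      obtain ⟨ε₁, hε₁, δ₂, hδ₂, Hest⟩ := caseC_est f g hf hgc α t Lg hα0 ε hε
      obtain ⟨δ₁, hδ₁, H1⟩ := hg.2 hnodd ε₁ hε₁
      refine ⟨min δ₁ δ₂, lt_min hδ₁ hδ₂, fun s hsT h1 h2 => ?_⟩
      have habs : |t - s| < min δ₁ δ₂ := by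
        rw [abs_of_pos (by linarith)]
        have := min_le_left δ₁ δ₂; linarith [min_le_left δ₁ δ₂]
      have hb := H1 s hsT (by linarith [min_le_left δ₁ δ₂] : t - δ₁ < s) h2
      rw [← hσdef, ← hσ] at hb ⊢
      simp only [Function.comp_apply]
      exact Hest s (lt_of_lt_of_le habs (min_le_right _ _)) hb
  · -- right-scattered case: t < σ
    have hd : (0:ℝ) < σ - t := by linarith
    by_cases hodd : IsOddRecip α
    · -- identity from plugging s = t
      have hId : Lg * (σ - t) ^ α = g σ - g t := by
        have hC : (0:ℝ) < (σ - t) ^ α := Real.rpow_pos_of_pos hd α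
        have hX : ∀ ε > (0:ℝ), |(g σ - g t) - Lg * (σ - t) ^ α| ≤ ε := by
          intro ε hε
          obtain ⟨δ, hδ, H⟩ := hg.1 hodd (ε / (σ - t) ^ α) (by positivity)
          have hH := H t htT (by simpa using hδ)
          rw [fpow_of_pos hd, abs_of_pos hd] at hH
          calc |(g σ - g t) - Lg * (σ - t) ^ α| ≤ ε / (σ - t) ^ α * (σ - t) ^ α := hH
            _ = ε := div_mul_cancel₀ ε hC.ne'
        have h0 : |(g σ - g t) - Lg * (σ - t) ^ α| ≤ 0 :=
          le_of_forall_pos_le_add (by simpa using hX)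
        have := abs_eq_zero.1 (le_antisymm h0 (abs_nonneg _))
        linarith
      obtain ⟨c, hc, Hstrong⟩ := caseA_strong f g hf hgc α t Lg σ hα0 hσ hId
      refine ⟨c, hc, strong_to_frac T (f ∘ g) α t _ ?_⟩
      intro ε hε
      obtain ⟨δ, hδ, H⟩ := Hstrong ε hε
      exact ⟨δ, hδ, fun s hs => H s hs⟩
    · by_cases hdense : ∀ δ > (0:ℝ), ∃ s ∈ T, t - δ < s ∧ s < t
      · -- identity from approaching from the left
        have hId : Lg * (σ - t) ^ α = g σ - g t := by
          have hX : ∀ ε > (0:ℝ), |(g σ - g t) - Lg * (σ - t) ^ α| ≤ ε := by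
            intro ε hε
            set C₂ := (2 * (σ - t)) ^ α with hC₂def
            have hC₂ : (0:ℝ) < C₂ := Real.rpow_pos_of_pos (by linarith) α
            set ε₁ := ε / (C₂ + 2) with hε₁def
            have hε₁ : (0:ℝ) < ε₁ := by positivity
            obtain ⟨δ₁, hδ₁, H1⟩ := hg.2 hodd ε₁ hε₁
            obtain ⟨δ₂, hδ₂, H2⟩ := Metric.continuousAt_iff.1 hgc.continuousAt ε₁ hε₁
            have hrc : ContinuousAt (fun u : ℝ => (σ - u) ^ α) t := by
              have h1 : ContinuousAt (fun x : ℝ => x ^ α) (σ - t) :=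
                Real.continuousAt_rpow_const _ _ (Or.inl (sub_ne_zero.2 hσ.ne'))
              exact h1.comp ((continuous_const.sub continuous_id).continuousAt)
            obtain ⟨δ₃, hδ₃, H3⟩ := Metric.continuousAt_iff.1 hrc (ε₁ / (|Lg| + 1)) (by positivity)
            obtain ⟨s, hsT, hs1, hs2⟩ := hdense (min (min δ₁ δ₂) (min δ₃ (σ - t)))
              (lt_min (lt_min hδ₁ hδ₂) (lt_min hδ₃ hd))
            have hm1 : min (min δ₁ δ₂) (min δ₃ (σ - t)) ≤ δ₁ :=
              le_trans (min_le_left _ _) (min_le_left _ _)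
            have hm2 : min (min δ₁ δ₂) (min δ₃ (σ - t)) ≤ δ₂ :=
              le_trans (min_le_left _ _) (min_le_right _ _)
            have hm3 : min (min δ₁ δ₂) (min δ₃ (σ - t)) ≤ δ₃ :=
              le_trans (min_le_right _ _) (min_le_left _ _)
            have hm4 : min (min δ₁ δ₂) (min δ₃ (σ - t)) ≤ σ - t :=
              le_trans (min_le_right _ _) (min_le_right _ _)
            have hts1 : t - δ₁ < s := by linarith
            have hts2 : t - δ₂ < s := by linarith
            have hts3 : t - δ₃ < s := by linarith
            have hts4 : t - (σ - t) < s := by linarith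
            have hσs0 : (0:ℝ) < σ - s := by linarith
            have hσs2 : σ - s ≤ 2 * (σ - t) := by linarith
            have hb := H1 s hsT hts1 hs2
            rw [fpow_of_pos hσs0, abs_of_pos hσs0] at hb
            have hgb : |g s - g t| < ε₁ := by
              have := H2 (x := s) (by rw [Real.dist_eq, abs_of_neg (by linarith : s - t < 0)]; linarith)
              rwa [Real.dist_eq] at this
            have hrb : |(σ - s) ^ α - (σ - t) ^ α| < ε₁ / (|Lg| + 1) := by
              have := H3 (x := s) (by rw [Real.dist_eq, abs_of_neg (by linarith : s - t < 0)]; linarith)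
              rwa [Real.dist_eq] at this
            have hdec : (g σ - g t) - Lg * (σ - t) ^ α
                = ((g σ - g s) - Lg * (σ - s) ^ α) + (g s - g t)
                  + Lg * ((σ - s) ^ α - (σ - t) ^ α) := by ring
            have hpow_le : (σ - s) ^ α ≤ C₂ :=
              Real.rpow_le_rpow hσs0.le hσs2 hα0.le
            have hterm1 : ε₁ * (σ - s) ^ α ≤ ε₁ * C₂ :=
              mul_le_mul_of_nonneg_left hpow_le hε₁.le
            have hterm3 : |Lg| * (ε₁ / (|Lg| + 1)) ≤ ε₁ := by
              have h1 : |Lg| * (ε₁ / (|Lg| + 1)) ≤ (|Lg| + 1) * (ε₁ / (|Lg| + 1)) := by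
                refine mul_le_mul_of_nonneg_right (by linarith) (by positivity)
              have h2 : (|Lg| + 1) * (ε₁ / (|Lg| + 1)) = ε₁ := by
                field_simp
              linarith
            calc |(g σ - g t) - Lg * (σ - t) ^ α|
                ≤ |(g σ - g s) - Lg * (σ - s) ^ α| + |g s - g t|
                  + |Lg| * |(σ - s) ^ α - (σ - t) ^ α| := by
                  rw [hdec]
                  refine le_trans (abs_add_le _ _) ?_
                  have := abs_add_le ((g σ - g s) - Lg * (σ - s) ^ α) (g s - g t)
                  rw [abs_mul]
                  linarith
              _ ≤ ε₁ * C₂ + ε₁ + ε₁ := by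
                  have := mul_le_mul_of_nonneg_left hrb.le (abs_nonneg Lg)
                  have h3 : |Lg| * |(σ - s) ^ α - (σ - t) ^ α| ≤ ε₁ := le_trans this hterm3
                  linarith [le_trans hb hterm1]
              _ = ε₁ * (C₂ + 2) := by ring
              _ = ε := by rw [hε₁def]; field_simp
          have h0 : |(g σ - g t) - Lg * (σ - t) ^ α| ≤ 0 :=
            le_of_forall_pos_le_add (by simpa using hX)
          have := abs_eq_zero.1 (le_antisymm h0 (abs_nonneg _))
          linarith
        obtain ⟨c, hc, Hstrong⟩ := caseA_strong f g hf hgc α t Lg σ hα0 hσ hId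
        refine ⟨c, hc, strong_to_frac T (f ∘ g) α t _ ?_⟩
        intro ε hε
        obtain ⟨δ, hδ, H⟩ := Hstrong ε hε
        exact ⟨δ, hδ, fun s hs => H s hs⟩
      · -- vacuous case: no points of T just to the left of t
        push_neg at hdense
        obtain ⟨δ₀, hδ₀, hemp⟩ := hdense
        refine ⟨t, ⟨le_refl t, hσge⟩, ⟨fun h => absurd h hodd, ?_⟩⟩
        intro _ ε hε
        refine ⟨δ₀, hδ₀, fun s hsT h1 h2 => ?_⟩
        exact absurd h2 (by simpa using hemp s hsT h1)
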